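/- Suppose Λ⁺ − Rᵀ|Λ⁻|R is positive definite and take Σ = |Λ⁻|. Then there exists δ > 0 such that for every invertible q×q matrix S̃ with operator norm ‖S̃‖ < δ, setting S = S̃⁻¹|Λ⁻|^{1/2}, one has for all W⁺ ∈ ℝ^p, W⁻ ∈ ℝ^q and G ∈ ℝ^q the lower bound BT(W⁺, W⁻) + 2(W⁻)ᵀΣ(W⁻ − R W⁺ − S⁻¹G) ≥ −GᵀG; i.e., the weakly penalized boundary term is bounded from below solely in terms of the external data G. -/

import Mathlib

open Matrix
open scoped Matrix.Norms.L2Operator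

set_option maxHeartbeats 1000000

private noncomputable def eu {n : ℕ} (x : Fin n → ℝ) : EuclideanSpace ℝ (Fin n) := WithLp.toLp 2 x

private lemma eu_dot {n : ℕ} (x y : Fin n → ℝ) :
    x ⬝ᵥ y = inner (𝕜 := ℝ) (eu x) (eu y) := by
  simp [eu, PiLp.inner_apply, dotProduct, RCLike.inner_apply, mul_comm]

private lemma dot_le_norm {n : ℕ} (x y : Fin n → ℝ) :
    x ⬝ᵥ y ≤ ‖eu x‖ * ‖eu y‖ := by
  rw [eu_dot]; exact real_inner_le_norm _ _

private lemma dot_self_eq {n : ℕ} (x : Fin n → ℝ) : x ⬝ᵥ x = ‖eu x‖ ^ 2 := by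
  rw [eu_dot]; exact real_inner_self_eq_norm_sq _

private lemma dot_self_nonneg' {n : ℕ} (x : Fin n → ℝ) : 0 ≤ x ⬝ᵥ x := by
  rw [dot_self_eq]; positivity

private lemma eu_mulVec_le {m n : ℕ} (A : Matrix (Fin m) (Fin n) ℝ) (x : Fin n → ℝ) :
    ‖eu (A.mulVec x)‖ ≤ ‖A‖ * ‖eu x‖ :=
  by simpa [eu] using A.l2_opNorm_mulVec (eu x)

private lemma symm_dot {n : ℕ} {A : Matrix (Fin n) (Fin n) ℝ} (hA : Aᵀ = A)
    (x y : Fin n → ℝ) : A.mulVec x ⬝ᵥ y = x ⬝ᵥ A.mulVec y := by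
  rw [Matrix.dotProduct_mulVec, ← Matrix.mulVec_transpose, hA]

/-- If `Λ⁺ − Rᵀ|Λ⁻|R` is positive definite and `Σ = |Λ⁻|` (here named `Pen`),
then there exists `δ > 0` such that for every invertible `S̃` with operator norm `‖S̃‖ < δ`,
setting `S = S̃⁻¹|Λ⁻|^{1/2}`, the weakly penalized boundary term is bounded from below
solely by the data: `BT(W⁺, W⁻) + 2(W⁻)ᵀΣ(W⁻ − R W⁺ − S⁻¹G) ≥ −GᵀG`. -/
theorem weak_inhomogeneous_bc_bound {p q : ℕ}
    (Λp : Matrix (Fin p) (Fin p) ℝ) (Λm : Matrix (Fin q) (Fin q) ℝ)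
    (hΛpDiag : Λp.IsDiag) (hΛpNonneg : ∀ i, 0 ≤ Λp i i)
    (hΛmDiag : Λm.IsDiag) (hΛmNeg : ∀ i, Λm i i < 0)
    (R : Matrix (Fin q) (Fin p) ℝ)
    (Λh : Matrix (Fin q) (Fin q) ℝ)
    (hΛh : Λh = Matrix.diagonal fun i => Real.sqrt (-Λm i i))
    (hPD : (Λp - Rᵀ * (-Λm) * R).PosDef)
    (Pen : Matrix (Fin q) (Fin q) ℝ) (hPen : Pen = -Λm) :
    ∃ δ > (0 : ℝ), ∀ St : Matrix (Fin q) (Fin q) ℝ, IsUnit St.det → ‖St‖ < δ →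
      ∀ (S : Matrix (Fin q) (Fin q) ℝ), S = St⁻¹ * Λh →
        ∀ (Wp : Fin p → ℝ) (Wm : Fin q → ℝ) (G : Fin q → ℝ),
          Wp ⬝ᵥ Λp.mulVec Wp + Wm ⬝ᵥ Λm.mulVec Wm
            + 2 * (Wm ⬝ᵥ Pen.mulVec (Wm - R.mulVec Wp - S⁻¹.mulVec G))
            ≥ -(G ⬝ᵥ G) := by
  subst hPen
  set A : Matrix (Fin p) (Fin p) ℝ := Λp - Rᵀ * (-Λm) * R with hAdef
  -- basic facts about Λh
  have hΛhT : Λhᵀ = Λh := by rw [hΛh, Matrix.diagonal_transpose]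
  have hHH : Λh * Λh = -Λm := by
    rw [hΛh, Matrix.diagonal_mul_diagonal]
    ext i j
    by_cases h : i = j
    · subst h
      simp [Matrix.diagonal_apply_eq,
        Real.mul_self_sqrt (le_of_lt (neg_pos.2 (hΛmNeg i)))]
    · simp [Matrix.diagonal_apply_ne _ h, hΛmDiag h]
  have hΛhUnit : IsUnit Λh.det := by
    rw [hΛh, Matrix.det_diagonal]
    exact (Finset.prod_pos fun i _ =>
      Real.sqrt_pos.2 (by have := hΛmNeg i; linarith)).ne'.isUnit
  -- facts about A
  have hAUnit : IsUnit A.det := (Matrix.isUnit_iff_isUnit_det A).1 hPD.isUnit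
  have hAT : Aᵀ = A := by
    have h := hPD.isHermitian
    rwa [Matrix.IsHermitian, Matrix.conjTranspose_eq_transpose_of_trivial] at h
  have hAAinv : A * A⁻¹ = 1 := Matrix.mul_nonsing_inv _ hAUnit
  set K : ℝ := ‖A⁻¹‖ * ‖Rᵀ * Λh‖ ^ 2 with hK
  have hKnn : 0 ≤ K := by rw [hK]; positivity
  have hKpos : (0 : ℝ) < 1 + K := by linarith
  refine ⟨Real.sqrt (1 / (1 + K)), Real.sqrt_pos.2 (by positivity), ?_⟩
  intro St hStUnit hStNorm S hS Wp Wm G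
  have hStSq : ‖St‖ ^ 2 * (1 + K) ≤ 1 := by
    have h1 : ‖St‖ ^ 2 < 1 / (1 + K) :=
      (Real.lt_sqrt (norm_nonneg St)).1 hStNorm
    have h2 : ‖St‖ ^ 2 * (1 + K) < 1 := (lt_div_iff₀ hKpos).1 h1
    linarith
  -- compute S⁻¹ and Pen * S⁻¹
  have hSinv : S⁻¹ = Λh⁻¹ * St := by
    rw [hS, Matrix.mul_inv_rev, Matrix.nonsing_inv_nonsing_inv _ hStUnit]
  have hPS : (-Λm) * S⁻¹ = Λh * St := by
    rw [hSinv, ← hHH, Matrix.mul_assoc, ← Matrix.mul_assoc Λh Λh⁻¹ St,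
      Matrix.mul_nonsing_inv _ hΛhUnit, Matrix.one_mul]
  -- abbreviations
  set a : Fin q → ℝ := Λh.mulVec Wm with ha
  set b : Fin q → ℝ := Λh.mulVec (R.mulVec Wp) with hb
  set v : Fin q → ℝ := St.mulVec G with hv
  set w : Fin p → ℝ := Rᵀ.mulVec (Λh.mulVec v) with hw
  set y : Fin p → ℝ := A⁻¹.mulVec w with hy
  -- the quadratic form of -Λm factors through Λh
  have hSig : ∀ x z : Fin q → ℝ,
      x ⬝ᵥ (-Λm).mulVec z = Λh.mulVec x ⬝ᵥ Λh.mulVec z := by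
    intro x z
    rw [← hHH, ← Matrix.mulVec_mulVec, symm_dot hΛhT]
  -- scalar identities
  have h1 : Wm ⬝ᵥ Λm.mulVec Wm = -(a ⬝ᵥ a) := by
    have := hSig Wm Wm
    rw [Matrix.neg_mulVec, dotProduct_neg] at this
    rw [← ha] at this
    linarith
  have h2 : Wm ⬝ᵥ (-Λm).mulVec (Wm - R.mulVec Wp - S⁻¹.mulVec G)
      = a ⬝ᵥ a - a ⬝ᵥ b - a ⬝ᵥ v := by
    rw [Matrix.mulVec_sub, Matrix.mulVec_sub, dotProduct_sub,
      dotProduct_sub]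
    have e1 : Wm ⬝ᵥ (-Λm).mulVec Wm = a ⬝ᵥ a := by rw [hSig, ← ha]
    have e2 : Wm ⬝ᵥ (-Λm).mulVec (R.mulVec Wp) = a ⬝ᵥ b := by
      rw [hSig, ← ha, ← hb]
    have e3 : Wm ⬝ᵥ (-Λm).mulVec (S⁻¹.mulVec G) = a ⬝ᵥ v := by
      rw [Matrix.mulVec_mulVec, hPS, ← Matrix.mulVec_mulVec, ← hv,
        ← symm_dot hΛhT, ← ha]
    rw [e1, e2, e3]
  have hRWp : ∀ z : Fin q → ℝ, Wp ⬝ᵥ Rᵀ.mulVec z = R.mulVec Wp ⬝ᵥ z := by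
    intro z
    rw [Matrix.dotProduct_mulVec, Matrix.vecMul_transpose]
  have h3 : Wp ⬝ᵥ A.mulVec Wp = Wp ⬝ᵥ Λp.mulVec Wp - b ⬝ᵥ b := by
    rw [hAdef, Matrix.sub_mulVec, dotProduct_sub]
    congr 1
    rw [← Matrix.mulVec_mulVec, ← Matrix.mulVec_mulVec, hRWp, hSig, ← hb]
  have h6 : Wp ⬝ᵥ w = b ⬝ᵥ v := by
    rw [hw, hRWp, ← symm_dot hΛhT, ← hb]
  -- positive-definiteness inequality
  have hAy : A.mulVec y = w := by
    rw [hy, Matrix.mulVec_mulVec, hAAinv, Matrix.one_mulVec]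
  have hPDineq : 2 * (Wp ⬝ᵥ w) ≤ Wp ⬝ᵥ A.mulVec Wp + w ⬝ᵥ y := by
    have h0 := hPD.posSemidef.dotProduct_mulVec_nonneg (Wp - y)
    rw [star_trivial] at h0
    have e1 : A.mulVec (Wp - y) = A.mulVec Wp - w := by
      rw [Matrix.mulVec_sub, hAy]
    rw [e1] at h0
    simp only [sub_dotProduct, dotProduct_sub] at h0
    have hyAWp : y ⬝ᵥ A.mulVec Wp = Wp ⬝ᵥ w := by
      rw [← symm_dot hAT, hAy, dotProduct_comm]
    have hyw : y ⬝ᵥ w = w ⬝ᵥ y := dotProduct_comm _ _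
    linarith
  -- elementary inequality 2⟨u,v⟩ ≤ ⟨u,u⟩ + ⟨v,v⟩ with u = a - b
  have hCS : 2 * ((a - b) ⬝ᵥ v) ≤ (a - b) ⬝ᵥ (a - b) + v ⬝ᵥ v := by
    have h0 := dot_self_nonneg' (a - b - v)
    simp only [sub_dotProduct, dotProduct_sub] at h0 ⊢
    have hc1 := dotProduct_comm a v
    have hc2 := dotProduct_comm b v
    have hc3 := dotProduct_comm a b
    linarith
  have hu : (a - b) ⬝ᵥ (a - b) = a ⬝ᵥ a - 2 * (a ⬝ᵥ b) + b ⬝ᵥ b := by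
    simp only [sub_dotProduct, dotProduct_sub]
    have hc3 := dotProduct_comm a b
    linarith
  have huv : (a - b) ⬝ᵥ v = a ⬝ᵥ v - b ⬝ᵥ v := by
    rw [sub_dotProduct]
  -- norm bounds
  have hnv : ‖eu v‖ ≤ ‖St‖ * ‖eu G‖ := eu_mulVec_le St G
  have hnw : ‖eu w‖ ≤ ‖Rᵀ * Λh‖ * ‖eu v‖ := by
    have e : w = (Rᵀ * Λh).mulVec v := by rw [hw, Matrix.mulVec_mulVec]
    rw [e]; exact eu_mulVec_le _ v
  have hny : ‖eu y‖ ≤ ‖A⁻¹‖ * ‖eu w‖ := eu_mulVec_le _ w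
  have hvv : v ⬝ᵥ v = ‖eu v‖ ^ 2 := dot_self_eq v
  have hGG : G ⬝ᵥ G = ‖eu G‖ ^ 2 := dot_self_eq G
  have hwyn : w ⬝ᵥ y ≤ ‖eu w‖ * ‖eu y‖ := dot_le_norm w y
  -- combine
  have hnvnn : (0 : ℝ) ≤ ‖eu v‖ := norm_nonneg _
  have hnwnn : (0 : ℝ) ≤ ‖eu w‖ := norm_nonneg _
  have hnGnn : (0 : ℝ) ≤ ‖eu G‖ := norm_nonneg _
  have hStnn : (0 : ℝ) ≤ ‖St‖ := norm_nonneg _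
  have hBnn : (0 : ℝ) ≤ ‖Rᵀ * Λh‖ := norm_nonneg _
  have hAinn : (0 : ℝ) ≤ ‖A⁻¹‖ := norm_nonneg _
  have hvv2 : v ⬝ᵥ v ≤ ‖St‖ ^ 2 * ‖eu G‖ ^ 2 := by
    rw [hvv, ← mul_pow]
    exact pow_le_pow_left₀ hnvnn hnv 2
  have hnw2 : ‖eu w‖ ≤ ‖Rᵀ * Λh‖ * (‖St‖ * ‖eu G‖) :=
    hnw.trans (mul_le_mul_of_nonneg_left hnv hBnn)
  have hwy2 : w ⬝ᵥ y ≤ ‖A⁻¹‖ * ‖Rᵀ * Λh‖ ^ 2 * (‖St‖ ^ 2 * ‖eu G‖ ^ 2) := by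
    have s1 : w ⬝ᵥ y ≤ ‖eu w‖ * (‖A⁻¹‖ * ‖eu w‖) :=
      hwyn.trans (mul_le_mul_of_nonneg_left hny hnwnn)
    have s2 : ‖eu w‖ * (‖A⁻¹‖ * ‖eu w‖) = ‖A⁻¹‖ * ‖eu w‖ ^ 2 := by ring
    have s3 : ‖eu w‖ ^ 2 ≤ (‖Rᵀ * Λh‖ * (‖St‖ * ‖eu G‖)) ^ 2 :=
      pow_le_pow_left₀ hnwnn hnw2 2
    have s4 : (‖Rᵀ * Λh‖ * (‖St‖ * ‖eu G‖)) ^ 2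
        = ‖Rᵀ * Λh‖ ^ 2 * (‖St‖ ^ 2 * ‖eu G‖ ^ 2) := by ring
    have s5 : ‖A⁻¹‖ * ‖eu w‖ ^ 2
        ≤ ‖A⁻¹‖ * (‖Rᵀ * Λh‖ ^ 2 * (‖St‖ ^ 2 * ‖eu G‖ ^ 2)) := by
      apply mul_le_mul_of_nonneg_left _ hAinn
      rw [← s4]; exact s3
    calc w ⬝ᵥ y ≤ ‖A⁻¹‖ * ‖eu w‖ ^ 2 := by rw [← s2]; exact s1
      _ ≤ ‖A⁻¹‖ * (‖Rᵀ * Λh‖ ^ 2 * (‖St‖ ^ 2 * ‖eu G‖ ^ 2)) := s5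
      _ = ‖A⁻¹‖ * ‖Rᵀ * Λh‖ ^ 2 * (‖St‖ ^ 2 * ‖eu G‖ ^ 2) := by ring
  have hdata : v ⬝ᵥ v + w ⬝ᵥ y ≤ G ⬝ᵥ G := by
    have hsum : v ⬝ᵥ v + w ⬝ᵥ y ≤ ‖St‖ ^ 2 * (1 + K) * ‖eu G‖ ^ 2 := by
      have e : ‖St‖ ^ 2 * ‖eu G‖ ^ 2
          + ‖A⁻¹‖ * ‖Rᵀ * Λh‖ ^ 2 * (‖St‖ ^ 2 * ‖eu G‖ ^ 2)
          = ‖St‖ ^ 2 * (1 + K) * ‖eu G‖ ^ 2 := by rw [hK]; ring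
      linarith
    have e2 : ‖St‖ ^ 2 * (1 + K) * ‖eu G‖ ^ 2 ≤ 1 * ‖eu G‖ ^ 2 :=
      mul_le_mul_of_nonneg_right hStSq (by positivity)
    rw [hGG]; linarith
  -- final assembly
  rw [ge_iff_le, h1, h2]
  linarith [hPDineq, hCS, hu, huv, hdata, h6, h3]
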